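/- Let z ∈ ℍ be a point of the upper half-plane whose imaginary part is maximal within its orbit under the group A₀(N) generated by Γ₀(N) and all Atkin–Lehner operators, where N is a squarefree natural number. Then Im(z) ≥ √3/(2N), and for every pair of integers (c,d) ≠ (0,0) one has |cz + d|² ≥ gcd(c,N)/N. -/

import Mathlib

open Complex

/-- The action of a real matrix `[[a,b],[c,d]]` of positive determinant on the upper
half-plane, written on `ℂ`. -/
noncomputable def moebius (a b c d : ℝ) (z : ℂ) : ℂ :=
  ((a : ℂ) * z + b) / ((c : ℂ) * z + d)

lemma moeb_im (a b c d : ℝ) (z : ℂ) :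
    (moebius a b c d z).im = (a*d - b*c) * z.im / Complex.normSq ((c:ℂ)*z + d) := by
  simp only [moebius, Complex.div_im, Complex.normSq_apply, Complex.add_re, Complex.add_im,
    Complex.mul_re, Complex.mul_im, Complex.ofReal_re, Complex.ofReal_im]
  ring

lemma bottom_ne (c d : ℤ) (z : ℂ) (hz : 0 < z.im) (h : ¬(c = 0 ∧ d = 0)) :
    (c:ℂ)*z + d ≠ 0 := by
  intro h0
  have him : (c:ℝ) * z.im = 0 := by
    have := congrArg Complex.im h0
    simpa using this
  have hc : c = 0 := by
    rcases mul_eq_zero.mp him with h | h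
    · exact_mod_cast h
    · exact absurd h (ne_of_gt hz)
  subst hc
  have : (d:ℂ) = 0 := by simpa using h0
  exact h ⟨rfl, by exact_mod_cast this⟩

/-- core consequence of maximality: `Q ≤ |cz+d|²` for any admissible matrix. -/
lemma bound (N : ℕ) (hN : 0 < N) (z : ℂ) (hz : 0 < z.im)
    (hmax : ∀ (a b c d : ℤ) (Q : ℕ), Q ∣ N → Nat.Coprime Q (N / Q) →
      (N : ℤ) ∣ c → (Q : ℤ) ∣ a → (Q : ℤ) ∣ d → a * d - b * c = (Q : ℤ) →
      (moebius a b c d z).im ≤ z.im)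
    (a b c d : ℤ) (Q : ℕ) (hQN : Q ∣ N) (hcop : Nat.Coprime Q (N / Q))
    (h1 : (N : ℤ) ∣ c) (h2 : (Q : ℤ) ∣ a) (h3 : (Q : ℤ) ∣ d)
    (hdet : a * d - b * c = (Q : ℤ)) :
    (Q : ℝ) ≤ Complex.normSq ((c:ℂ)*z + d) := by
  have hQ0 : 0 < Q := Nat.pos_of_dvd_of_pos hQN hN
  have hcd : ¬(c = 0 ∧ d = 0) := by
    rintro ⟨rfl, rfl⟩
    simp at hdet
    omega
  have hne : (c:ℂ)*z + d ≠ 0 := bottom_ne c d z hz hcd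
  have hS : 0 < Complex.normSq ((c:ℂ)*z + d) := Complex.normSq_pos.mpr hne
  have him := hmax a b c d Q hQN hcop h1 h2 h3 hdet
  rw [moeb_im] at him
  push_cast at him
  have hdet' : ((a:ℝ)*(d:ℝ) - (b:ℝ)*(c:ℝ)) = (Q:ℝ) := by exact_mod_cast hdet
  rw [hdet', div_le_iff₀ hS] at him
  nlinarith [hz, hS]

lemma key_coprime (N : ℕ) (hN : 0 < N) (hsf : Squarefree N) (z : ℂ) (hz : 0 < z.im)
    (hmax : ∀ (a b c d : ℤ) (Q : ℕ), Q ∣ N → Nat.Coprime Q (N / Q) →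
      (N : ℤ) ∣ c → (Q : ℤ) ∣ a → (Q : ℤ) ∣ d → a * d - b * c = (Q : ℤ) →
      (moebius a b c d z).im ≤ z.im)
    (c d : ℤ) (hcd : IsCoprime c d) :
    (Int.gcd c (N:ℤ) : ℝ) / N ≤ Complex.normSq ((c:ℂ)*z + d) := by
  set g : ℕ := Int.gcd c (N:ℤ) with hg
  have hgN : g ∣ N := by
    have : (g:ℤ) ∣ (N:ℤ) := Int.gcd_dvd_right _ _
    exact_mod_cast this
  have hg0 : 0 < g := Nat.pos_of_dvd_of_pos hgN hN
  set Q : ℕ := N / g with hQ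
  have hQg : Q * g = N := Nat.div_mul_cancel hgN
  have hQ0 : 0 < Q := Nat.pos_of_ne_zero (by
    rintro h; rw [h, zero_mul] at hQg; omega)
  have hQN : Q ∣ N := ⟨g, hQg.symm⟩
  have hNQ : N / Q = g := by
    rw [← hQg, Nat.mul_div_cancel_left _ hQ0]
  have hcopQg : Nat.Coprime Q g := by
    have : Squarefree (Q * g) := by rwa [hQg]
    exact Nat.coprime_of_squarefree_mul this
  have hcop : Nat.Coprime Q (N / Q) := by rwa [hNQ]
  -- gcd c Q = 1
  have hcQ : IsCoprime c (Q:ℤ) := by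
    rw [Int.isCoprime_iff_gcd_eq_one]
    set t := Int.gcd c (Q:ℤ) with ht
    have ht1 : (t:ℤ) ∣ c := Int.gcd_dvd_left _ _
    have ht2 : (t:ℤ) ∣ (Q:ℤ) := Int.gcd_dvd_right _ _
    have ht3 : (t:ℤ) ∣ (N:ℤ) := ht2.trans (by exact_mod_cast hQN)
    have ht4 : (t:ℤ) ∣ (g:ℤ) := Int.dvd_coe_gcd ht1 ht3
    have ht5 : t ∣ g := by exact_mod_cast ht4
    have ht6 : t ∣ Q := by exact_mod_cast ht2
    have := Nat.dvd_gcd ht6 ht5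
    rw [Nat.Coprime.gcd_eq_one hcopQg] at this
    exact Nat.dvd_one.mp this
  have hcQd : IsCoprime c ((Q:ℤ) * d) := hcQ.mul_right hcd
  obtain ⟨u, v, huv⟩ := hcQd
  -- matrix ((Q*v, -u), (Q*c, Q*d))
  obtain ⟨k, hk⟩ : (g:ℤ) ∣ c := Int.gcd_dvd_left _ _
  have hNZ : (N:ℤ) = (Q:ℤ) * (g:ℤ) := by exact_mod_cast hQg.symm
  have h1 : (N:ℤ) ∣ (Q:ℤ) * c := ⟨k, by rw [hk, hNZ]; ring⟩
  have hdet : ((Q:ℤ)*v) * ((Q:ℤ)*d) - (-u) * ((Q:ℤ)*c) = (Q:ℤ) := by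
    linear_combination (Q:ℤ) * huv
  have hb := bound N hN z hz hmax ((Q:ℤ)*v) (-u) ((Q:ℤ)*c) ((Q:ℤ)*d) Q hQN hcop h1
    (dvd_mul_right _ _) (dvd_mul_right _ _) hdet
  -- hb : Q ≤ normSq (Q*c*z + Q*d) = Q^2 * normSq (c*z+d)
  have hns : Complex.normSq ((((Q:ℤ)*c : ℤ):ℂ)*z + (((Q:ℤ)*d : ℤ):ℂ))
      = (Q:ℝ)^2 * Complex.normSq ((c:ℂ)*z + d) := by
    push_cast
    rw [show ((Q:ℂ)*(c:ℂ))*z + (Q:ℂ)*(d:ℂ) = (Q:ℂ) * ((c:ℂ)*z + d) by ring,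
      Complex.normSq_mul]
    rw [Complex.normSq_natCast]
    ring
  rw [hns] at hb
  have hQR : (0:ℝ) < Q := by exact_mod_cast hQ0
  have hgR : (0:ℝ) < g := by exact_mod_cast hg0
  have hgoal : (g:ℝ)/N = 1/(Q:ℝ) := by
    rw [show ((N:ℝ)) = (Q:ℝ) * (g:ℝ) by exact_mod_cast hQg.symm]
    field_simp
  rw [hgoal]
  rw [div_le_iff₀ hQR] at *
  nlinarith [hb, hQR]

lemma key_general (N : ℕ) (hN : 0 < N) (hsf : Squarefree N) (z : ℂ) (hz : 0 < z.im)
    (hmax : ∀ (a b c d : ℤ) (Q : ℕ), Q ∣ N → Nat.Coprime Q (N / Q) →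
      (N : ℤ) ∣ c → (Q : ℤ) ∣ a → (Q : ℤ) ∣ d → a * d - b * c = (Q : ℤ) →
      (moebius a b c d z).im ≤ z.im)
    (c d : ℤ) (h : (c, d) ≠ (0, 0)) :
    (Int.gcd c (N:ℤ) : ℝ) / N ≤ Complex.normSq ((c:ℂ)*z + d) := by
  set e : ℕ := Int.gcd c d with he
  have he0 : 0 < e := by
    rcases Nat.eq_zero_or_pos e with h0 | h0
    · exfalso
      obtain ⟨hc, hd⟩ := Int.gcd_eq_zero_iff.mp h0
      exact h (by simp [hc, hd])
    · exact h0
  set c₁ : ℤ := c / e with hc1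
  set d₁ : ℤ := d / e with hd1
  have hc : (e:ℤ) * c₁ = c := Int.mul_ediv_cancel' (Int.gcd_dvd_left _ _)
  have hd : (e:ℤ) * d₁ = d := Int.mul_ediv_cancel' (Int.gcd_dvd_right _ _)
  have hcop : IsCoprime c₁ d₁ := by
    rw [Int.isCoprime_iff_gcd_eq_one]
    exact Int.gcd_div_gcd_div_gcd (by exact_mod_cast he0)
  have hS1 := key_coprime N hN hsf z hz hmax c₁ d₁ hcop
  -- normSq identity
  have hns : Complex.normSq ((c:ℂ)*z + d) = (e:ℝ)^2 * Complex.normSq ((c₁:ℂ)*z + d₁) := by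
    rw [← hc, ← hd]
    push_cast
    rw [show ((e:ℂ)*(c₁:ℂ))*z + (e:ℂ)*(d₁:ℂ) = (e:ℂ) * ((c₁:ℂ)*z + d₁) by ring,
      Complex.normSq_mul, Complex.normSq_natCast]
    ring
  -- gcd inequality : Int.gcd c N ≤ e^2 * Int.gcd c₁ N
  have hgcd : Int.gcd c (N:ℤ) ≤ e^2 * Int.gcd c₁ (N:ℤ) := by
    have hna : c.natAbs = e * c₁.natAbs := by
      rw [← hc, Int.natAbs_mul, Int.natAbs_natCast]
    have hdvd : Nat.gcd (e * c₁.natAbs) N ∣ Nat.gcd e N * Nat.gcd c₁.natAbs N := by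
      have := gcd_mul_dvd_mul_gcd N e c₁.natAbs
      rw [gcd_eq_nat_gcd, gcd_eq_nat_gcd, gcd_eq_nat_gcd] at this
      rw [Nat.gcd_comm (e * c₁.natAbs) N, Nat.gcd_comm e N, Nat.gcd_comm c₁.natAbs N]
      exact this
    have hle : Nat.gcd (e * c₁.natAbs) N ≤ Nat.gcd e N * Nat.gcd c₁.natAbs N := by
      refine Nat.le_of_dvd ?_ hdvd
      have h1 : 0 < Nat.gcd e N := Nat.gcd_pos_of_pos_right _ hN
      have h2 : 0 < Nat.gcd c₁.natAbs N := Nat.gcd_pos_of_pos_right _ hN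
      positivity
    have h3 : Nat.gcd e N ≤ e := Nat.le_of_dvd he0 (Nat.gcd_dvd_left _ _)
    have h4 : Nat.gcd c₁.natAbs N ≤ e * Nat.gcd c₁.natAbs N := Nat.le_mul_of_pos_left _ he0
    calc Int.gcd c (N:ℤ) = Nat.gcd (e * c₁.natAbs) N := by
          rw [Int.gcd, hna]; rfl
      _ ≤ Nat.gcd e N * Nat.gcd c₁.natAbs N := hle
      _ ≤ e * (e * Nat.gcd c₁.natAbs N) := by
          exact Nat.mul_le_mul h3 h4
      _ = e^2 * Int.gcd c₁ (N:ℤ) := by rw [Int.gcd]; ring_nf; rfl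
  have hNR : (0:ℝ) < N := by exact_mod_cast hN
  have heR : (1:ℝ) ≤ (e:ℝ) := by exact_mod_cast he0
  have hgcdR : (Int.gcd c (N:ℤ) : ℝ) ≤ (e:ℝ)^2 * (Int.gcd c₁ (N:ℤ) : ℝ) := by
    exact_mod_cast hgcd
  rw [hns]
  calc (Int.gcd c (N:ℤ) : ℝ) / N ≤ ((e:ℝ)^2 * (Int.gcd c₁ (N:ℤ) : ℝ)) / N := by
        gcongr
    _ = (e:ℝ)^2 * ((Int.gcd c₁ (N:ℤ) : ℝ) / N) := by ring
    _ ≤ (e:ℝ)^2 * Complex.normSq ((c₁:ℂ)*z + d₁) :=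
        mul_le_mul_of_nonneg_left hS1 (by positivity)

/-- Let `N` be squarefree and let `z ∈ ℍ` have maximal imaginary part within its orbit
under the group `A₀(N)` generated by `Γ₀(N)` and the Atkin–Lehner operators (realized by
the integral matrices `[[a,b],[c,d]]` with `N ∣ c`, `Q ∣ a`, `Q ∣ d` and determinant `Q`,
for `Q` an exact divisor of `N`).  Then `Im z ≥ √3/(2N)`, and for every pair of integers
`(c,d) ≠ (0,0)` one has `|cz + d|² ≥ gcd(c,N)/N`. -/
theorem stmt_3 (N : ℕ) (hN : 0 < N) (hsf : Squarefree N)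
    (z : ℂ) (hz : 0 < z.im)
    (hmax : ∀ (a b c d : ℤ) (Q : ℕ), Q ∣ N → Nat.Coprime Q (N / Q) →
      (N : ℤ) ∣ c → (Q : ℤ) ∣ a → (Q : ℤ) ∣ d → a * d - b * c = (Q : ℤ) →
      (moebius a b c d z).im ≤ z.im) :
    Real.sqrt 3 / (2 * N) ≤ z.im ∧
      ∀ c d : ℤ, (c, d) ≠ (0, 0) →
        (Int.gcd c (N : ℤ) : ℝ) / N ≤ Complex.normSq ((c : ℂ) * z + d) := by
  have key := key_general N hN hsf z hz hmax
  refine ⟨?_, fun c d h => key c d h⟩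
  set r : ℤ := round ((N:ℝ) * z.re) with hr
  have hNne : ((N:ℤ), -r) ≠ ((0:ℤ), (0:ℤ)) := by
    intro hh
    rw [Prod.mk.injEq] at hh
    omega
  have h1 := key (N:ℤ) (-r) hNne
  have hgcd : Int.gcd (N:ℤ) (N:ℤ) = N := by
    rw [Int.gcd_self, Int.natAbs_natCast]
  rw [hgcd] at h1
  have hNR : (0:ℝ) < N := by exact_mod_cast hN
  have h1' : (1:ℝ) ≤ Complex.normSq ((N:ℂ)*z + ((-r : ℤ):ℂ)) := by
    rwa [div_self (ne_of_gt hNR)] at h1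
  have hns : Complex.normSq ((N:ℂ)*z + ((-r : ℤ):ℂ))
      = ((N:ℝ)*z.re - r)^2 + ((N:ℝ)*z.im)^2 := by
    simp [Complex.normSq_apply, Complex.add_re, Complex.add_im, Complex.mul_re, Complex.mul_im]
    ring
  rw [hns] at h1'
  have habs : |(N:ℝ)*z.re - r| ≤ 1/2 := abs_sub_round _
  obtain ⟨ha1, ha2⟩ := abs_le.mp habs
  have hsq : (3:ℝ) ≤ (2*(N:ℝ)*z.im)^2 := by nlinarith
  have hpos : (0:ℝ) ≤ 2*(N:ℝ)*z.im := by positivity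
  have hsqrt : Real.sqrt 3 ≤ 2*(N:ℝ)*z.im := by
    calc Real.sqrt 3 ≤ Real.sqrt ((2*(N:ℝ)*z.im)^2) := Real.sqrt_le_sqrt hsq
      _ = 2*(N:ℝ)*z.im := Real.sqrt_sq hpos
  rw [div_le_iff₀ (by positivity)]
  linarith
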